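/- Let G be a finite group and define the ⋆ operation on ℂ[G] by (∑_g x(g) g)⋆ = ∑_g conj(x(g)) g⁻¹. For any idempotent e ∈ ℂ[G], the orthogonal complement of the left ideal ℂ[G]e with respect to the Hermitian inner product ⟨v,w⟩ = |G|⁻¹ ∑_g conj(v(g)) w(g) equals ℂ[G](1 − e⋆). -/

import Mathlib

/-- The conjugate-linear anti-involution `⋆` on `ℂ[G]`:
`(∑ x(g) g)⋆ = ∑ conj(x(g)) g⁻¹`. -/
noncomputable def starElt {G : Type*} [Group G] [Fintype G]
    (x : MonoidAlgebra ℂ G) : MonoidAlgebra ℂ G :=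
  ∑ g : G, MonoidAlgebra.single g⁻¹ (starRingEnd ℂ (x.coeff g))

lemma starElt_apply {G : Type*} [Group G] [Fintype G] (x : MonoidAlgebra ℂ G) (g : G) :
    (starElt x).coeff g = starRingEnd ℂ (x.coeff g⁻¹) := by
  classical
  simp only [starElt]
  rw [MonoidAlgebra.coeff_sum, Finset.sum_apply']
  rw [Finset.sum_eq_single g⁻¹]
  · simp [MonoidAlgebra.single_apply]
  · intro b _ hb
    simp [MonoidAlgebra.single_apply, inv_eq_iff_eq_inv, hb]
  · simp

lemma mul_apply_fin {G : Type*} [Group G] [Fintype G] (x y : MonoidAlgebra ℂ G) (t : G) :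
    (x * y).coeff t = ∑ g : G, x.coeff (t * g⁻¹) * y.coeff g := by
  classical
  conv_lhs => rw [show y = ∑ g : G, MonoidAlgebra.single g (y.coeff g) by
    ext a; rw [MonoidAlgebra.coeff_sum, Finset.sum_apply']; rw [Finset.sum_eq_single a] <;>
      simp +contextual [MonoidAlgebra.single_apply, eq_comm]]
  rw [Finset.mul_sum, MonoidAlgebra.coeff_sum, Finset.sum_apply']
  exact Finset.sum_congr rfl fun g _ => by rw [MonoidAlgebra.mul_single_apply]

lemma trace_comm {G : Type*} [Group G] [Fintype G] (x y : MonoidAlgebra ℂ G) :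
    (x * y).coeff 1 = (y * x).coeff 1 := by
  rw [mul_apply_fin, mul_apply_fin]
  rw [← Equiv.sum_comp (Equiv.inv G)]
  simp [mul_comm]

lemma starElt_mul {G : Type*} [Group G] [Fintype G] (x y : MonoidAlgebra ℂ G) :
    starElt (x * y) = starElt y * starElt x := by
  ext g
  rw [starElt_apply, mul_apply_fin, mul_apply_fin, map_sum]
  refine Fintype.sum_equiv (Equiv.mulRight g) _ _ fun h => ?_
  simp only [Equiv.coe_mulRight, starElt_apply, map_mul, mul_inv_rev, inv_inv]
  rw [mul_comm]
  congr 2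
  group

lemma starElt_starElt {G : Type*} [Group G] [Fintype G] (x : MonoidAlgebra ℂ G) :
    starElt (starElt x) = x := by
  ext g
  simp [starElt_apply]

lemma inner_eq {G : Type*} [Group G] [Fintype G] (v w : MonoidAlgebra ℂ G) :
    ∑ g : G, starRingEnd ℂ (v.coeff g) * w.coeff g = (starElt v * w).coeff 1 := by
  rw [mul_apply_fin]
  refine Finset.sum_congr rfl fun g _ => ?_
  rw [starElt_apply]
  simp

/-- For an idempotent `e ∈ ℂ[G]`, the orthogonal complement of the left ideal `ℂ[G]e`
with respect to `⟨v,w⟩ = |G|⁻¹ ∑ conj(v(g)) w(g)` is `ℂ[G](1 − e⋆)`. -/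
theorem orthogonal_of_leftIdeal_eq {G : Type*} [Group G] [Fintype G]
    (e : MonoidAlgebra ℂ G) (he : e * e = e) :
    {w : MonoidAlgebra ℂ G | ∀ v : MonoidAlgebra ℂ G,
        (∃ a : MonoidAlgebra ℂ G, v = a * e) →
        (Fintype.card G : ℂ)⁻¹ * ∑ g : G, starRingEnd ℂ (v.coeff g) * w.coeff g = 0}
      = {w : MonoidAlgebra ℂ G | ∃ a : MonoidAlgebra ℂ G, w = a * (1 - starElt e)} := by
  have hcard : ((Fintype.card G : ℂ))⁻¹ ≠ 0 := by
    simp [Fintype.card_ne_zero]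
  have hestar : starElt e * starElt e = starElt e := by
    rw [← starElt_mul, he]
  ext w
  simp only [Set.mem_setOf_eq]
  constructor
  · intro hw
    have hkey : w * starElt e = 0 := by
      ext g
      have h1 := hw (starElt (MonoidAlgebra.single g⁻¹ (1:ℂ)) * e)
        ⟨starElt (MonoidAlgebra.single g⁻¹ (1:ℂ)), rfl⟩
      rw [mul_eq_zero] at h1
      rcases h1 with h1 | h1
      · exact absurd h1 hcard
      · rw [inner_eq, starElt_mul, starElt_starElt, mul_assoc, trace_comm,
          mul_assoc, trace_comm, MonoidAlgebra.mul_single_apply] at h1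
        simpa using h1
    exact ⟨w, by rw [mul_sub, mul_one, hkey, sub_zero]⟩
  · rintro ⟨a, rfl⟩ v ⟨b, rfl⟩
    rw [inner_eq, starElt_mul]
    have hz : a * (1 - starElt e) * starElt e = 0 := by
      rw [mul_assoc, sub_mul, one_mul, hestar, sub_self, mul_zero]
    have h0 : (starElt e * starElt b * (a * (1 - starElt e))).coeff 1 = 0 := by
      rw [trace_comm, ← mul_assoc, hz, zero_mul]
      simp
    rw [h0, mul_zero]
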